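/- arXiv:1706.05290 — 2 statements merged into one kernel-verified Lean document; each statement's English description precedes it below -/
import Mathlib

section
/- If v^max := 1_n + 2·L_red⁻¹ q belongs to D, then g(v^max) ≤ v^max componentwise. -/
open Finset Matrix

noncomputable section

/-- Extension of a voltage vector `v ∈ ℝⁿ` to all buses `{0,1,…,n}`,
with the slack-bus convention `v₀ = 1`. -/
def extV {n : ℕ} (v : Fin n → ℝ) : Fin (n + 1) → ℝ := Fin.cons (1 : ℝ) v

/-- The domain `D = {v ∈ ℝⁿ : vᵢ > 0 ∀ i, vᵢ vₖ ≥ sᵢₖ² on every edge}` (with `v₀ = 1`). -/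
def memD {n : ℕ} (B : Matrix (Fin (n + 1)) (Fin (n + 1)) ℝ)
    (s : Fin (n + 1) → Fin (n + 1) → ℝ) (v : Fin n → ℝ) : Prop :=
  (∀ i, 0 < v i) ∧ ∀ i k, 0 < B i k → s i k ^ 2 ≤ extV v i * extV v k

/-- The fixed-point map `g` with
`gᵢ(v) = qᵢ/𝐁ᵢ + Σ_{k ∈ N(i)} (Bᵢₖ/𝐁ᵢ)·√(vᵢvₖ − sᵢₖ²)`. -/
def gmap {n : ℕ} (B : Matrix (Fin (n + 1)) (Fin (n + 1)) ℝ)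
    (s : Fin (n + 1) → Fin (n + 1) → ℝ) (q : Fin n → ℝ) (v : Fin n → ℝ) :
    Fin n → ℝ := fun i =>
  q i / (∑ k, B i.succ k) +
    ∑ k ∈ Finset.univ.filter (fun k => 0 < B i.succ k),
      (B i.succ k / (∑ k', B i.succ k')) *
        Real.sqrt (extV v i.succ * extV v k - s i.succ k ^ 2)

/-- The reduced Laplacian `L_red` (Laplacian of the weighted graph with the
row and column of vertex `0` deleted). -/
def Lred {n : ℕ} (B : Matrix (Fin (n + 1)) (Fin (n + 1)) ℝ) :
    Matrix (Fin n) (Fin n) ℝ := fun i k =>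
  if i = k then ∑ j, B i.succ j else -B i.succ k.succ

/-- `v^max := 1ₙ + 2·L_red⁻¹ q`. -/
def vmax {n : ℕ} (B : Matrix (Fin (n + 1)) (Fin (n + 1)) ℝ) (q : Fin n → ℝ) :
    Fin n → ℝ := fun i => 1 + 2 * ((Lred B)⁻¹ *ᵥ q) i

private lemma eq_of_reachable {V : Type*} (G : SimpleGraph V) (f : V → ℝ)
    (h : ∀ a b, G.Adj a b → f a = f b) {u v : V} (hr : G.Reachable u v) : f u = f v := by
  obtain ⟨p⟩ := hr
  induction p with
  | nil => rfl
  | cons h' _ ih => exact (h _ _ h').trans ih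

private lemma exists_adj_of_walk {V : Type*} {G : SimpleGraph V} :
    ∀ {u v : V}, G.Walk u v → u ≠ v → ∃ b, G.Adj u b
  | _, _, SimpleGraph.Walk.nil, h => absurd rfl h
  | _, _, SimpleGraph.Walk.cons h' _, _ => ⟨_, h'⟩

private lemma lred_apply {n : ℕ} (B : Matrix (Fin (n+1)) (Fin (n+1)) ℝ)
    (hBdiag : ∀ i, B i i = 0) (x : Fin n → ℝ) (i : Fin n) :
    (Lred B *ᵥ x) i = (∑ j, B i.succ j) * x i - ∑ k, B i.succ k.succ * x k := by
  have hterm : ∀ k : Fin n, Lred B i k * x k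
      = (if k = i then (∑ j, B i.succ j) * x i else 0) - B i.succ k.succ * x k := by
    intro k
    unfold Lred
    by_cases h : i = k
    · subst h
      rw [if_pos rfl, if_pos rfl, hBdiag]
      ring
    · rw [if_neg h, if_neg (Ne.symm h)]
      ring
  show ∑ k, Lred B i k * x k = _
  rw [Finset.sum_congr rfl (fun k _ => hterm k), Finset.sum_sub_distrib,
    Finset.sum_ite_eq' Finset.univ i]
  simp

private lemma lred_det_ne_zero {n : ℕ} (B : Matrix (Fin (n+1)) (Fin (n+1)) ℝ)
    (hBsymm : ∀ i k, B i k = B k i) (hBdiag : ∀ i, B i i = 0)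
    (hBnonneg : ∀ i k, 0 ≤ B i k)
    (G : SimpleGraph (Fin (n+1))) (hGadj : ∀ i k, G.Adj i k ↔ 0 < B i k)
    (hconn : G.Connected) : (Lred B).det ≠ 0 := by
  intro hdet
  obtain ⟨x, hx0, hx⟩ := (Matrix.exists_mulVec_eq_zero_iff).mpr hdet
  set y : Fin (n+1) → ℝ := Fin.cons 0 x with hy
  -- quadratic form identity
  have hsplit : ∑ i, ∑ k, B i k * (y i - y k)^2
      = ((∑ i, ∑ k, B i k * y i ^2) + ∑ i, ∑ k, B i k * y k ^2)
          - 2 * ∑ i, ∑ k, B i k * y i * y k := by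
    rw [Finset.mul_sum, ← Finset.sum_add_distrib, ← Finset.sum_sub_distrib]
    refine Finset.sum_congr rfl fun i _ => ?_
    rw [Finset.mul_sum, ← Finset.sum_add_distrib, ← Finset.sum_sub_distrib]
    exact Finset.sum_congr rfl fun k _ => by ring
  have hswap : ∑ i, ∑ k, B i k * y k ^ 2 = ∑ i, ∑ k, B i k * y i ^ 2 := by
    rw [Finset.sum_comm]
    exact Finset.sum_congr rfl fun i _ => Finset.sum_congr rfl fun k _ => by rw [hBsymm]
  have h1 : ∑ i, ∑ k, B i k * y i ^ 2 = ∑ i : Fin n, (∑ k, B i.succ k) * x i ^ 2 := by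
    rw [Fin.sum_univ_succ]
    simp only [hy, Fin.cons_zero, Fin.cons_succ]
    simp [Finset.sum_mul]
  have h2 : ∑ i, ∑ k, B i k * y i * y k
      = ∑ i : Fin n, ∑ k : Fin n, B i.succ k.succ * x i * x k := by
    rw [Fin.sum_univ_succ]
    have h0 : ∑ k, B 0 k * y 0 * y k = 0 := by simp [hy]
    rw [h0, zero_add]
    refine Finset.sum_congr rfl fun i _ => ?_
    rw [Fin.sum_univ_succ]
    simp [hy]
  have hlin : ∑ i : Fin n, x i * (Lred B *ᵥ x) i = 0 := by simp [hx]
  have hform : (∑ i : Fin n, (∑ k, B i.succ k) * x i ^2)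
      - ∑ i : Fin n, ∑ k : Fin n, B i.succ k.succ * x i * x k
      = ∑ i : Fin n, x i * (Lred B *ᵥ x) i := by
    rw [← Finset.sum_sub_distrib]
    refine Finset.sum_congr rfl fun i _ => ?_
    rw [lred_apply B hBdiag x i, mul_sub, Finset.mul_sum]
    congr 1
    · ring
    · exact Finset.sum_congr rfl fun k _ => by ring
  have hQ : ∑ i, ∑ k, B i k * (y i - y k)^2 = 0 := by
    rw [hsplit, hswap, h1, h2]
    have h3 := hform.trans hlin
    linarith
  -- all terms vanish, so y is constant along edges
  have hzero : ∀ a b : Fin (n+1), B a b * (y a - y b)^2 = 0 := by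
    intro a b
    have houter := (Finset.sum_eq_zero_iff_of_nonneg (fun i _ =>
      Finset.sum_nonneg fun k _ => mul_nonneg (hBnonneg i k) (sq_nonneg _))).mp hQ a
      (Finset.mem_univ a)
    exact (Finset.sum_eq_zero_iff_of_nonneg (fun k _ =>
      mul_nonneg (hBnonneg a k) (sq_nonneg _))).mp houter b (Finset.mem_univ b)
  have hadj : ∀ a b, G.Adj a b → y a = y b := by
    intro a b hab
    have hb : 0 < B a b := (hGadj a b).mp hab
    have hsq : (y a - y b)^2 = 0 := by
      rcases mul_eq_zero.mp (hzero a b) with h | h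
      · exact absurd h (ne_of_gt hb)
      · exact h
    have := pow_eq_zero_iff (two_ne_zero) |>.mp hsq
    linarith [this]
  apply hx0
  funext i
  have hreach : y i.succ = y 0 := eq_of_reachable G y hadj (hconn.preconnected i.succ 0)
  simpa [hy] using hreach

theorem stmt2 {n : ℕ} (hn : 1 ≤ n)
    (B : Matrix (Fin (n + 1)) (Fin (n + 1)) ℝ)
    (hBsymm : ∀ i k, B i k = B k i)
    (hBdiag : ∀ i, B i i = 0)
    (hBnonneg : ∀ i k, 0 ≤ B i k)
    (G : SimpleGraph (Fin (n + 1)))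
    (hGadj : ∀ i k, G.Adj i k ↔ 0 < B i k)
    (hGtree : G.IsTree)
    (q : Fin n → ℝ)
    (s : Fin (n + 1) → Fin (n + 1) → ℝ)
    (hssymm : ∀ i k, s i k = s k i)
    (hmem : memD B s (vmax B q)) :
    ∀ i, gmap B s q (vmax B q) i ≤ vmax B q i := by
  intro i
  set w : Fin n → ℝ := (Lred B)⁻¹ *ᵥ q with hwdef
  have hdet := lred_det_ne_zero B hBsymm hBdiag hBnonneg G hGadj hGtree.isConnected
  have hLw : Lred B *ᵥ w = q := by
    rw [hwdef, Matrix.mulVec_mulVec,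
      Matrix.mul_nonsing_inv _ (isUnit_iff_ne_zero.mpr hdet), Matrix.one_mulVec]
  have hqi : q i = (∑ j, B i.succ j) * w i - ∑ k, B i.succ k.succ * w k := by
    conv_lhs => rw [← hLw]
    exact lred_apply B hBdiag w i
  have hv : ∀ j, vmax B q j = 1 + 2 * w j := fun j => rfl
  -- positivity of the degree
  have hBipos : 0 < ∑ j, B i.succ j := by
    have hne : i.succ ≠ (0 : Fin (n+1)) := Fin.succ_ne_zero i
    obtain ⟨p⟩ := hGtree.isConnected.preconnected i.succ 0
    obtain ⟨b, hadj⟩ := exists_adj_of_walk p hne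
    exact Finset.sum_pos' (fun k _ => hBnonneg _ _)
      ⟨b, Finset.mem_univ _, (hGadj _ _).mp hadj⟩
  have hvnn : ∀ j, 0 ≤ extV (vmax B q) j := by
    intro j
    refine Fin.cases ?_ ?_ j
    · norm_num [extV]
    · intro k
      simpa [extV] using (hmem.1 k).le
  -- the square-root bound
  have hsq : ∀ k : Fin (n+1),
      Real.sqrt (extV (vmax B q) i.succ * extV (vmax B q) k - s i.succ k ^ 2)
        ≤ (extV (vmax B q) i.succ + extV (vmax B q) k) / 2 := by
    intro k
    have h1 : extV (vmax B q) i.succ * extV (vmax B q) k - s i.succ k ^ 2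
        ≤ ((extV (vmax B q) i.succ + extV (vmax B q) k) / 2) ^ 2 := by
      nlinarith [sq_nonneg (extV (vmax B q) i.succ - extV (vmax B q) k),
        sq_nonneg (s i.succ k)]
    calc Real.sqrt (extV (vmax B q) i.succ * extV (vmax B q) k - s i.succ k ^ 2)
        ≤ Real.sqrt (((extV (vmax B q) i.succ + extV (vmax B q) k) / 2) ^ 2) :=
          Real.sqrt_le_sqrt h1
      _ = (extV (vmax B q) i.succ + extV (vmax B q) k) / 2 := by
          rw [Real.sqrt_sq (by have := hvnn i.succ; have := hvnn k; linarith)]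
  -- the key sum computation
  have hbig : ∑ k : Fin (n+1), B i.succ k * ((extV (vmax B q) i.succ + extV (vmax B q) k) / 2)
      = (∑ j : Fin (n+1), B i.succ j) * (1 + w i) + ∑ k : Fin n, B i.succ k.succ * w k := by
    rw [Fin.sum_univ_succ (f := fun k => B i.succ k * ((extV (vmax B q) i.succ + extV (vmax B q) k) / 2)),
      Fin.sum_univ_succ (f := fun j => B i.succ j)]
    simp only [extV, Fin.cons_zero, Fin.cons_succ, hv]
    have hS : ∑ k : Fin n, B i.succ k.succ * ((1 + 2 * w i + (1 + 2 * w k)) / 2)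
        = ∑ k : Fin n, (B i.succ k.succ * (1 + w i) + B i.succ k.succ * w k) :=
      Finset.sum_congr rfl fun k _ => by ring
    rw [hS, Finset.sum_add_distrib, ← Finset.sum_mul]
    ring
  -- combine everything
  have hfin : q i / (∑ j, B i.succ j)
      + ∑ k : Fin (n+1), (B i.succ k / (∑ j, B i.succ j))
          * ((extV (vmax B q) i.succ + extV (vmax B q) k) / 2) = vmax B q i := by
    have hcomb : ∑ k : Fin (n+1), (B i.succ k / (∑ j, B i.succ j))
          * ((extV (vmax B q) i.succ + extV (vmax B q) k) / 2)
        = (∑ k : Fin (n+1), B i.succ k * ((extV (vmax B q) i.succ + extV (vmax B q) k) / 2))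
            / (∑ j, B i.succ j) := by
      rw [Finset.sum_div]
      exact Finset.sum_congr rfl fun k _ => by ring
    rw [hcomb, hbig, hqi, hv i, ← add_div]
    field_simp
    ring
  calc gmap B s q (vmax B q) i
      ≤ q i / (∑ j, B i.succ j)
        + ∑ k ∈ Finset.univ.filter (fun k => 0 < B i.succ k),
            (B i.succ k / (∑ j, B i.succ j))
              * ((extV (vmax B q) i.succ + extV (vmax B q) k) / 2) := by
        unfold gmap
        apply add_le_add_right
        refine Finset.sum_le_sum fun k _ => ?_
        exact mul_le_mul_of_nonneg_left (hsq k)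
          (div_nonneg (hBnonneg _ _) hBipos.le)
    _ ≤ q i / (∑ j, B i.succ j)
        + ∑ k : Fin (n+1), (B i.succ k / (∑ j, B i.succ j))
            * ((extV (vmax B q) i.succ + extV (vmax B q) k) / 2) := by
        apply add_le_add_right
        refine Finset.sum_le_sum_of_subset_of_nonneg (Finset.filter_subset _ _) ?_
        intro k _ _
        have h1 := hvnn i.succ
        have h2 := hvnn k
        exact mul_nonneg (div_nonneg (hBnonneg _ _) hBipos.le) (by linarith)
    _ = vmax B q i := hfin
end
end

section
/- Suppose v^max := 1_n + 2·L_red⁻¹ q belongs to D and there exists v ∈ D with v ≤ g(v) componentwise. Then g has a fixed point v* ∈ D such that v' ≤ v* for every v' ∈ D with v' ≤ g(v'); moreover the fixed-point iteration v^{(0)} = v^max, v^{(i+1)} = g(v^{(i)}) is well defined (every iterate lies in D) and converges to v*. -/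
open Finset Matrix

noncomputable section

lemma sqrtAMGM (a b t : ℝ) (ha : 0 ≤ a) (hb : 0 ≤ b) (ht : 0 ≤ t) :
    Real.sqrt (a * b - t) ≤ (a + b) / 2 := by
  have h1 : Real.sqrt (a * b - t) ≤ Real.sqrt (a * b) := Real.sqrt_le_sqrt (by linarith)
  have h2 : Real.sqrt (a * b) = Real.sqrt a * Real.sqrt b := Real.sqrt_mul ha b
  nlinarith [Real.sq_sqrt ha, Real.sq_sqrt hb, sq_nonneg (Real.sqrt a - Real.sqrt b),
    Real.sqrt_nonneg a, Real.sqrt_nonneg b]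


lemma extV_nonneg {n : ℕ} {v : Fin n → ℝ} (hv : ∀ i, 0 ≤ v i) (j : Fin (n+1)) :
    0 ≤ extV v j := by
  induction j using Fin.cases with
  | zero => simp [extV]
  | succ m => simpa [extV] using hv m


lemma extV_le {n : ℕ} {v v' : Fin n → ℝ} (h : ∀ i, v i ≤ v' i) (j : Fin (n+1)) :
    extV v j ≤ extV v' j := by
  induction j using Fin.cases with
  | zero => simp [extV]
  | succ m => simpa [extV] using h m


lemma mulVec_Lred {n : ℕ} (B : Matrix (Fin (n + 1)) (Fin (n + 1)) ℝ)
    (hBdiag : ∀ i, B i i = 0) (v : Fin n → ℝ) (i : Fin n) :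
    (Lred B *ᵥ v) i = (∑ k, B i.succ k) * v i - ∑ k, B i.succ k.succ * v k := by
  have : ∀ k : Fin n, Lred B i k * v k
      = (if i = k then (∑ j, B i.succ j) * v k else 0) - B i.succ k.succ * v k := by
    intro k
    by_cases h : i = k
    · subst h; simp [Lred, hBdiag]
    · simp only [Lred, if_neg h]; ring
  simp only [Matrix.mulVec, dotProduct]
  rw [Finset.sum_congr rfl fun k _ => this k, Finset.sum_sub_distrib,
    Finset.sum_ite_eq (Finset.univ : Finset (Fin n)) i (fun k => (∑ j, B i.succ j) * v k)]
  simp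


lemma maxprin {n : ℕ} (hn : 1 ≤ n) (B : Matrix (Fin (n + 1)) (Fin (n + 1)) ℝ)
    (hBdiag : ∀ i, B i i = 0) (hBnonneg : ∀ i k, 0 ≤ B i k)
    (G : SimpleGraph (Fin (n + 1)))
    (hGadj : ∀ i k, G.Adj i k ↔ 0 < B i k) (hGconn : G.Connected)
    (w : Fin n → ℝ) (hw : ∀ i, (Lred B *ᵥ w) i ≤ 0) : ∀ i, w i ≤ 0 := by
  by_contra hcon
  push_neg at hcon
  obtain ⟨i0, hi0⟩ := hcon
  have hne : (Finset.univ : Finset (Fin n)).Nonempty := ⟨i0, Finset.mem_univ _⟩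
  obtain ⟨j0, -, hj0⟩ := Finset.exists_max_image Finset.univ w hne
  set c := w j0 with hc
  have hcpos : 0 < c := lt_of_lt_of_le hi0 (hj0 i0 (Finset.mem_univ _))
  set S : Set (Fin (n+1)) := {j | ∃ i : Fin n, j = i.succ ∧ w i = c} with hS
  have hclosed : ∀ j ∈ S, ∀ k, G.Adj j k → k ∈ S := by
    rintro j ⟨i, rfl, hwi⟩ k hadj
    have h1 : (∑ m, B i.succ m) * c - ∑ m, B i.succ m.succ * w m ≤ 0 := by
      have := hw i; rwa [mulVec_Lred B hBdiag, hwi] at this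
    have hsplit : (∑ m, B i.succ m) = B i.succ 0 + ∑ m : Fin n, B i.succ m.succ :=
      Fin.sum_univ_succ _
    have hT : ∀ m : Fin n, 0 ≤ B i.succ m.succ * (c - w m) := fun m =>
      mul_nonneg (hBnonneg _ _) (by linarith [hj0 m (Finset.mem_univ m)])
    have hTsum : ∑ m : Fin n, B i.succ m.succ * (c - w m)
        = (∑ m : Fin n, B i.succ m.succ) * c - ∑ m, B i.succ m.succ * w m := by
      rw [Finset.sum_mul, ← Finset.sum_sub_distrib]
      exact Finset.sum_congr rfl fun m _ => by ring
    have hB0c : B i.succ 0 * c + ∑ m : Fin n, B i.succ m.succ * (c - w m) ≤ 0 := by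
      rw [hTsum]; rw [hsplit] at h1; linarith
    have hTnonneg : 0 ≤ ∑ m : Fin n, B i.succ m.succ * (c - w m) :=
      Finset.sum_nonneg fun m _ => hT m
    have hB0 : B i.succ 0 * c = 0 := le_antisymm (by linarith) (mul_nonneg (hBnonneg _ _) hcpos.le)
    have hTzero : ∑ m : Fin n, B i.succ m.succ * (c - w m) = 0 := le_antisymm (by linarith) hTnonneg
    have hterm : ∀ m : Fin n, B i.succ m.succ * (c - w m) = 0 := by
      intro m
      have := (Finset.sum_eq_zero_iff_of_nonneg (fun m _ => hT m)).mp hTzero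
      exact this m (Finset.mem_univ m)
    induction k using Fin.cases with
    | zero =>
      have hB : 0 < B i.succ 0 := (hGadj _ _).mp hadj
      exact absurd hB0 (mul_pos hB hcpos).ne'
    | succ m =>
      have hB : 0 < B i.succ m.succ := (hGadj _ _).mp hadj
      have : c - w m = 0 := by
        rcases mul_eq_zero.mp (hterm m) with h | h
        · exact absurd h hB.ne'
        · exact h
      exact ⟨m, rfl, by linarith⟩
  have hwalk : ∀ {a b : Fin (n+1)}, G.Walk a b → a ∈ S → b ∈ S := by
    intro a b p
    induction p with
    | nil => exact id
    | cons h p ih => intro ha; exact ih (hclosed _ ha _ h)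
  obtain ⟨p⟩ := hGconn.preconnected j0.succ 0
  obtain ⟨i, hi, -⟩ := hwalk p ⟨j0, rfl, rfl⟩
  exact Fin.succ_ne_zero i hi.symm


lemma lred_isUnit {n : ℕ} (hn : 1 ≤ n) (B : Matrix (Fin (n + 1)) (Fin (n + 1)) ℝ)
    (hBdiag : ∀ i, B i i = 0) (hBnonneg : ∀ i k, 0 ≤ B i k)
    (G : SimpleGraph (Fin (n + 1)))
    (hGadj : ∀ i k, G.Adj i k ↔ 0 < B i k) (hGconn : G.Connected) :
    IsUnit (Lred B).det := by
  rw [isUnit_iff_ne_zero]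
  intro hdet
  obtain ⟨v, hv0, hveq⟩ := Matrix.exists_mulVec_eq_zero_iff.mpr hdet
  have h1 := maxprin hn B hBdiag hBnonneg G hGadj hGconn v (fun i => by rw [hveq]; simp)
  have h2 := maxprin hn B hBdiag hBnonneg G hGadj hGconn (-v)
    (fun i => by rw [Matrix.mulVec_neg, hveq]; simp)
  apply hv0
  funext i
  have := h1 i
  have h2i := h2 i
  simp only [Pi.neg_apply, neg_nonpos] at h2i
  exact le_antisymm (h1 i) h2i


lemma lred_vmax {n : ℕ} (hn : 1 ≤ n) (B : Matrix (Fin (n + 1)) (Fin (n + 1)) ℝ)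
    (hBdiag : ∀ i, B i i = 0) (hBnonneg : ∀ i k, 0 ≤ B i k)
    (G : SimpleGraph (Fin (n + 1)))
    (hGadj : ∀ i k, G.Adj i k ↔ 0 < B i k) (hGconn : G.Connected)
    (q : Fin n → ℝ) (i : Fin n) :
    (Lred B *ᵥ (fun k => 1 + 2 * ((Lred B)⁻¹ *ᵥ q) k)) i = B i.succ 0 + 2 * q i := by
  have hunit := lred_isUnit hn B hBdiag hBnonneg G hGadj hGconn
  have hinv : Lred B *ᵥ ((Lred B)⁻¹ *ᵥ q) = q := by
    rw [Matrix.mulVec_mulVec, Matrix.mul_nonsing_inv _ hunit, Matrix.one_mulVec]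
  have hones : (Lred B *ᵥ (fun _ => (1:ℝ))) i = B i.succ 0 := by
    rw [mulVec_Lred B hBdiag]
    simp [Fin.sum_univ_succ (f := fun k => B i.succ k)]
  have hsplit : (Lred B *ᵥ (fun k => 1 + 2 * ((Lred B)⁻¹ *ᵥ q) k)) i
      = (Lred B *ᵥ (fun _ => (1:ℝ))) i + 2 * (Lred B *ᵥ ((Lred B)⁻¹ *ᵥ q)) i := by
    simp only [Matrix.mulVec, dotProduct, Finset.mul_sum]
    rw [← Finset.sum_add_distrib]
    refine Finset.sum_congr rfl fun k _ => ?_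
    rw [mul_add, Finset.mul_sum]
    congr 1
    exact Finset.sum_congr rfl fun x _ => by ring
  rw [hsplit, hones, hinv]


lemma gmap_mono {n : ℕ} (B : Matrix (Fin (n + 1)) (Fin (n + 1)) ℝ)
    (s : Fin (n + 1) → Fin (n + 1) → ℝ) (q : Fin n → ℝ)
    (hBnonneg : ∀ i k, 0 ≤ B i k)
    {v v' : Fin n → ℝ} (hv : ∀ i, 0 ≤ v i) (h : ∀ i, v i ≤ v' i) (i : Fin n) :
    gmap B s q v i ≤ gmap B s q v' i := by
  unfold gmap
  refine add_le_add (le_refl _) (Finset.sum_le_sum fun k _ => ?_)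
  refine mul_le_mul_of_nonneg_left ?_ (div_nonneg (hBnonneg _ _)
    (Finset.sum_nonneg fun _ _ => hBnonneg _ _))
  refine Real.sqrt_le_sqrt (sub_le_sub_right ?_ _)
  exact mul_le_mul (extV_le h _) (extV_le h _) (extV_nonneg hv _)
    (le_trans (extV_nonneg hv _) (extV_le h _))


lemma gmap_ub {n : ℕ} (B : Matrix (Fin (n + 1)) (Fin (n + 1)) ℝ)
    (s : Fin (n + 1) → Fin (n + 1) → ℝ) (q : Fin n → ℝ)
    (hBnonneg : ∀ i k, 0 ≤ B i k)
    {v : Fin n → ℝ} (hv : ∀ i, 0 ≤ v i) (i : Fin n) :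
    gmap B s q v i ≤ q i / (∑ k, B i.succ k) +
      (∑ k, B i.succ k * (extV v i.succ + extV v k)) / (2 * (∑ k, B i.succ k)) := by
  unfold gmap
  refine add_le_add (le_refl _) ?_
  have step1 : ∑ k ∈ Finset.univ.filter (fun k => 0 < B i.succ k),
      (B i.succ k / (∑ k', B i.succ k')) *
        Real.sqrt (extV v i.succ * extV v k - s i.succ k ^ 2)
      ≤ ∑ k ∈ Finset.univ.filter (fun k => 0 < B i.succ k),
      (B i.succ k / (∑ k', B i.succ k')) * ((extV v i.succ + extV v k) / 2) := by
    refine Finset.sum_le_sum fun k _ => ?_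
    exact mul_le_mul_of_nonneg_left
      (sqrtAMGM _ _ _ (extV_nonneg hv _) (extV_nonneg hv _) (sq_nonneg _))
      (div_nonneg (hBnonneg _ _) (Finset.sum_nonneg fun _ _ => hBnonneg _ _))
  have step2 : ∑ k ∈ Finset.univ.filter (fun k => 0 < B i.succ k),
      (B i.succ k / (∑ k', B i.succ k')) * ((extV v i.succ + extV v k) / 2)
      ≤ ∑ k, (B i.succ k / (∑ k', B i.succ k')) * ((extV v i.succ + extV v k) / 2) := by
    refine Finset.sum_le_sum_of_subset_of_nonneg (Finset.filter_subset _ _) fun k _ _ => ?_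
    refine mul_nonneg (div_nonneg (hBnonneg _ _) (Finset.sum_nonneg fun _ _ => hBnonneg _ _)) ?_
    have := extV_nonneg hv (i.succ); have := extV_nonneg hv k
    linarith
  have step3 : ∑ k, (B i.succ k / (∑ k', B i.succ k')) * ((extV v i.succ + extV v k) / 2)
      = (∑ k, B i.succ k * (extV v i.succ + extV v k)) / (2 * (∑ k, B i.succ k)) := by
    rw [Finset.sum_div]
    refine Finset.sum_congr rfl fun k _ => ?_
    rw [div_mul_eq_mul_div, show B i.succ k * ((extV v i.succ + extV v k) / 2)
      = B i.succ k * (extV v i.succ + extV v k) / 2 from by ring, div_div]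
  calc _ ≤ _ := step1
    _ ≤ _ := step2
    _ = _ := step3


lemma Bsum_pos {n : ℕ} (B : Matrix (Fin (n + 1)) (Fin (n + 1)) ℝ)
    (hBnonneg : ∀ i k, 0 ≤ B i k)
    (G : SimpleGraph (Fin (n + 1)))
    (hGadj : ∀ i k, G.Adj i k ↔ 0 < B i k) (hGconn : G.Connected) (i : Fin n) :
    0 < ∑ k, B i.succ k := by
  obtain ⟨p⟩ := hGconn.preconnected i.succ 0
  cases p with
  | cons h q =>
    exact Finset.sum_pos' (fun k _ => hBnonneg _ _)
      ⟨_, Finset.mem_univ _, (hGadj _ _).mp h⟩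


lemma sum_ext {n : ℕ} (B : Matrix (Fin (n + 1)) (Fin (n + 1)) ℝ) (v : Fin n → ℝ) (i : Fin n) :
    ∑ k, B i.succ k * (extV v i.succ + extV v k)
      = (∑ k, B i.succ k) * v i + B i.succ 0 + ∑ k : Fin n, B i.succ k.succ * v k := by
  have h1 : ∑ k, B i.succ k * (extV v i.succ + extV v k)
      = (∑ k, B i.succ k * extV v i.succ) + ∑ k, B i.succ k * extV v k := by
    rw [← Finset.sum_add_distrib]; exact Finset.sum_congr rfl fun k _ => by ring
  rw [h1]
  have h2 : ∑ k, B i.succ k * extV v i.succ = (∑ k, B i.succ k) * v i := by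
    rw [Finset.sum_mul]
    exact Finset.sum_congr rfl fun k _ => by simp [extV]
  have h3 : ∑ k, B i.succ k * extV v k = B i.succ 0 + ∑ k : Fin n, B i.succ k.succ * v k := by
    rw [Fin.sum_univ_succ (f := fun k => B i.succ k * extV v k)]
    simp [extV]
  rw [h2, h3]; ring


lemma lred_bound {n : ℕ} (B : Matrix (Fin (n + 1)) (Fin (n + 1)) ℝ)
    (s : Fin (n + 1) → Fin (n + 1) → ℝ) (q : Fin n → ℝ)
    (hBdiag : ∀ i, B i i = 0) (hBnonneg : ∀ i k, 0 ≤ B i k)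
    (G : SimpleGraph (Fin (n + 1)))
    (hGadj : ∀ i k, G.Adj i k ↔ 0 < B i k) (hGconn : G.Connected)
    {v : Fin n → ℝ} (hv : ∀ i, 0 ≤ v i) (hle : ∀ i, v i ≤ gmap B s q v i) (i : Fin n) :
    (Lred B *ᵥ v) i ≤ 2 * q i + B i.succ 0 := by
  have hBpos := Bsum_pos B hBnonneg G hGadj hGconn i
  set BB := ∑ k, B i.succ k with hBB
  have h := le_trans (hle i) (gmap_ub B s q hBnonneg hv i)
  rw [sum_ext B v i] at h
  rw [mulVec_Lred B hBdiag]
  have hq : BB * (q i / BB) = q i := mul_div_cancel₀ _ hBpos.ne'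
  have hx : (2 * BB) * ((BB * v i + B i.succ 0 + ∑ k : Fin n, B i.succ k.succ * v k) / (2 * BB))
      = BB * v i + B i.succ 0 + ∑ k : Fin n, B i.succ k.succ * v k :=
    mul_div_cancel₀ _ (by positivity)
  nlinarith [mul_le_mul_of_nonneg_left h (le_of_lt (mul_pos two_pos hBpos))]


lemma gmap_vmax_le {n : ℕ} (hn : 1 ≤ n) (B : Matrix (Fin (n + 1)) (Fin (n + 1)) ℝ)
    (s : Fin (n + 1) → Fin (n + 1) → ℝ) (q : Fin n → ℝ)
    (hBdiag : ∀ i, B i i = 0) (hBnonneg : ∀ i k, 0 ≤ B i k)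
    (G : SimpleGraph (Fin (n + 1)))
    (hGadj : ∀ i k, G.Adj i k ↔ 0 < B i k) (hGconn : G.Connected)
    (hvm : ∀ i, 0 ≤ vmax B q i) (i : Fin n) :
    gmap B s q (vmax B q) i ≤ vmax B q i := by
  have hBpos := Bsum_pos B hBnonneg G hGadj hGconn i
  have h := gmap_ub B s q hBnonneg hvm i
  rw [sum_ext B (vmax B q) i] at h
  have hL : (Lred B *ᵥ vmax B q) i = B i.succ 0 + 2 * q i :=
    lred_vmax hn B hBdiag hBnonneg G hGadj hGconn q i
  rw [mulVec_Lred B hBdiag] at hL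
  set BB := ∑ k, B i.succ k with hBB
  have hs : ∑ k : Fin n, B i.succ k.succ * vmax B q k = BB * vmax B q i - B i.succ 0 - 2 * q i := by
    linarith
  rw [hs] at h
  have hq : BB * (q i / BB) = q i := mul_div_cancel₀ _ hBpos.ne'
  have hx : (2 * BB) * ((BB * vmax B q i + B i.succ 0 +
      (BB * vmax B q i - B i.succ 0 - 2 * q i)) / (2 * BB))
      = BB * vmax B q i + B i.succ 0 + (BB * vmax B q i - B i.succ 0 - 2 * q i) :=
    mul_div_cancel₀ _ (by positivity)
  nlinarith [mul_le_mul_of_nonneg_left h (le_of_lt (mul_pos two_pos hBpos))]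


lemma extV_cont {n : ℕ} (j : Fin (n+1)) : Continuous fun v : Fin n → ℝ => extV v j := by
  induction j using Fin.cases with
  | zero => simpa [extV] using continuous_const
  | succ m => simpa [extV] using continuous_apply m


lemma gmap_cont {n : ℕ} (B : Matrix (Fin (n + 1)) (Fin (n + 1)) ℝ)
    (s : Fin (n + 1) → Fin (n + 1) → ℝ) (q : Fin n → ℝ) :
    Continuous (gmap B s q) := by
  refine continuous_pi fun i => ?_
  unfold gmap
  refine Continuous.add continuous_const (continuous_finset_sum _ fun k _ => ?_)
  exact continuous_const.mul (Real.continuous_sqrt.comp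
    (((extV_cont _).mul (extV_cont _)).sub continuous_const))


theorem stmt12 {n : ℕ} (hn : 1 ≤ n)
    (B : Matrix (Fin (n + 1)) (Fin (n + 1)) ℝ)
    (hBsymm : ∀ i k, B i k = B k i)
    (hBdiag : ∀ i, B i i = 0)
    (hBnonneg : ∀ i k, 0 ≤ B i k)
    (G : SimpleGraph (Fin (n + 1)))
    (hGadj : ∀ i k, G.Adj i k ↔ 0 < B i k)
    (hGtree : G.IsTree)
    (q : Fin n → ℝ)
    (s : Fin (n + 1) → Fin (n + 1) → ℝ)
    (hssymm : ∀ i k, s i k = s k i)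
    (hvmaxD : memD B s (vmax B q))
    (hfeas : ∃ v, memD B s v ∧ ∀ i, v i ≤ gmap B s q v i) :
    ∃ vstar : Fin n → ℝ, memD B s vstar ∧ gmap B s q vstar = vstar ∧
      (∀ v', memD B s v' → (∀ i, v' i ≤ gmap B s q v' i) → ∀ i, v' i ≤ vstar i) ∧
      (∀ m : ℕ, memD B s ((gmap B s q)^[m] (vmax B q))) ∧
      Filter.Tendsto (fun m => (gmap B s q)^[m] (vmax B q)) Filter.atTop (nhds vstar) := by
  have hGconn : G.Connected := hGtree.isConnected
  obtain ⟨v, hvD, hvle⟩ := hfeas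
  have hvpos : ∀ i, 0 < v i := hvD.1
  have hvm_nonneg : ∀ i, 0 ≤ vmax B q i := fun i => (hvmaxD.1 i).le
  set w : ℕ → Fin n → ℝ := fun m => (gmap B s q)^[m] (vmax B q) with hw
  have hstep : ∀ m, w (m+1) = gmap B s q (w m) := by
    intro m; rw [hw]; exact Function.iterate_succ_apply' _ _ _
  have hzero : w 0 = vmax B q := by rw [hw]; simp
  -- any subsolution is below vmax
  have hsub_vmax : ∀ (v' : Fin n → ℝ), (∀ i, 0 < v' i) →
      (∀ i, v' i ≤ gmap B s q v' i) → ∀ i, v' i ≤ vmax B q i := by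
    intro v' hv'pos hv'le
    have hb : ∀ i, (Lred B *ᵥ (v' - vmax B q)) i ≤ 0 := by
      intro i
      rw [Matrix.mulVec_sub]
      have h1 := lred_bound B s q hBdiag hBnonneg G hGadj hGconn
        (fun j => (hv'pos j).le) hv'le i
      have h2 := lred_vmax hn B hBdiag hBnonneg G hGadj hGconn q i
      have h2' : (Lred B *ᵥ vmax B q) i = B i.succ 0 + 2 * q i := by
        convert h2 using 2
        rfl
      simp only [Pi.sub_apply]
      linarith
    intro i
    have := maxprin hn B hBdiag hBnonneg G hGadj hGconn _ hb i
    simp only [Pi.sub_apply] at this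
    linarith
  -- any subsolution is below every iterate
  have key : ∀ (v' : Fin n → ℝ), (∀ i, 0 < v' i) →
      (∀ i, v' i ≤ gmap B s q v' i) → ∀ m i, v' i ≤ w m i := by
    intro v' hv'pos hv'le m
    induction m with
    | zero => exact hsub_vmax v' hv'pos hv'le
    | succ m ih =>
      intro i
      rw [hstep m]
      exact le_trans (hv'le i)
        (gmap_mono B s q hBnonneg (fun j => (hv'pos j).le) ih i)
  have hA : ∀ m i, v i ≤ w m i := key v hvpos hvle
  have hB' : ∀ m i, w (m+1) i ≤ w m i := by
    intro m
    induction m with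
    | zero =>
      intro i
      rw [hstep 0, hzero]
      exact gmap_vmax_le hn B s q hBdiag hBnonneg G hGadj hGconn hvm_nonneg i
    | succ m ih =>
      intro i
      rw [hstep (m+1)]
      conv_rhs => rw [hstep m]
      exact gmap_mono B s q hBnonneg
        (fun j => le_trans (hvpos j).le (hA (m+1) j)) ih i
  have hant : ∀ i, Antitone fun m => w m i :=
    fun i => antitone_nat_of_succ_le fun m => hB' m i
  have hbdd : ∀ i, BddBelow (Set.range fun m => w m i) := by
    intro i
    refine ⟨v i, ?_⟩
    rintro x ⟨m, rfl⟩
    exact hA m i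
  set vstar : Fin n → ℝ := fun i => ⨅ m, w m i with hvstar
  have htend_i : ∀ i, Filter.Tendsto (fun m => w m i) Filter.atTop (nhds (vstar i)) :=
    fun i => tendsto_atTop_ciInf (hant i) (hbdd i)
  have htend : Filter.Tendsto w Filter.atTop (nhds vstar) := tendsto_pi_nhds.mpr htend_i
  have hvstar_ge : ∀ (v' : Fin n → ℝ), (∀ i, 0 < v' i) →
      (∀ i, v' i ≤ gmap B s q v' i) → ∀ i, v' i ≤ vstar i :=
    fun v' h1 h2 i => le_ciInf fun m => key v' h1 h2 m i
  have hvvstar : ∀ i, v i ≤ vstar i := hvstar_ge v hvpos hvle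
  have hvstar_pos : ∀ i, 0 < vstar i := fun i => lt_of_lt_of_le (hvpos i) (hvvstar i)
  have hDstar : memD B s vstar := by
    constructor
    · exact hvstar_pos
    · intro i k hBik
      refine le_trans (hvD.2 i k hBik) ?_
      exact mul_le_mul (extV_le hvvstar i) (extV_le hvvstar k)
        (extV_nonneg (fun j => (hvpos j).le) k)
        (le_trans (extV_nonneg (fun j => (hvpos j).le) i) (extV_le hvvstar i))
  have hDm : ∀ m : ℕ, memD B s (w m) := by
    intro m
    constructor
    · exact fun i => lt_of_lt_of_le (hvpos i) (hA m i)
    · intro i k hBik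
      refine le_trans (hvD.2 i k hBik) ?_
      exact mul_le_mul (extV_le (hA m) i) (extV_le (hA m) k)
        (extV_nonneg (fun j => (hvpos j).le) k)
        (le_trans (extV_nonneg (fun j => (hvpos j).le) i) (extV_le (hA m) i))
  have hfix : gmap B s q vstar = vstar := by
    have h1 : Filter.Tendsto (fun m => w (m+1)) Filter.atTop (nhds vstar) :=
      htend.comp (Filter.tendsto_add_atTop_nat 1)
    have h2 : Filter.Tendsto (fun m => gmap B s q (w m)) Filter.atTop
        (nhds (gmap B s q vstar)) := ((gmap_cont B s q).tendsto vstar).comp htend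
    have he : (fun m => w (m+1)) = fun m => gmap B s q (w m) :=
      funext hstep
    rw [he] at h1
    exact tendsto_nhds_unique h2 h1
  exact ⟨vstar, hDstar, hfix,
    fun v' hv'D hv'le i => hvstar_ge v' hv'D.1 hv'le i, hDm, htend⟩
end
end
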